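/- For any two fundamental elements p, q of the near-regular partial field 𝕌₁ with p, q ∉ {0, 1}, there exists an automorphism of 𝕌₁ taking p to q. -/

import Mathlib

/-- The transcendental element `α` of `ℚ(α)`. -/
noncomputable def nrAlpha : RatFunc ℚ := RatFunc.X

/-- The near-regular partial field `𝕌₁`, viewed as the subset
`⟨-1, α, 1-α⟩ ∪ {0}` of `ℚ(α)`. -/
def U1 : Set (RatFunc ℚ) :=
  {x | x = 0 ∨ ∃ (ε : RatFunc ℚ) (i j : ℤ),
    (ε = 1 ∨ ε = -1) ∧ x = ε * nrAlpha ^ i * (1 - nrAlpha) ^ j}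

/-- `p` is a fundamental element of `𝕌₁` if `p ∈ 𝕌₁` and `1 - p ∈ 𝕌₁`. -/
def IsFund (p : RatFunc ℚ) : Prop := p ∈ U1 ∧ (1 - p) ∈ U1

/-- An automorphism of the partial field `𝕌₁`: a bijection of `𝕌₁` fixing `1`,
preserving products, preserving defined sums, and reflecting definedness of sums. -/
structure U1Auto where
  toFun : RatFunc ℚ → RatFunc ℚ
  bijOn : Set.BijOn toFun U1 U1
  map_one : toFun 1 = 1
  map_mul : ∀ p ∈ U1, ∀ q ∈ U1, toFun (p * q) = toFun p * toFun q
  map_add : ∀ p ∈ U1, ∀ q ∈ U1, p + q ∈ U1 → toFun (p + q) = toFun p + toFun q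
  defined_iff : ∀ p ∈ U1, ∀ q ∈ U1, (p + q ∈ U1 ↔ toFun p + toFun q ∈ U1)

open Polynomial
local notation "K" => RatFunc ℚ

lemma nrA_ne : (nrAlpha : K) ≠ 0 := RatFunc.X_ne_zero

lemma one_sub_poly_ne : (1 - Polynomial.X : Polynomial ℚ) ≠ 0 := by
  intro h
  have := congrArg (Polynomial.eval 0) h
  simp at this

lemma one_sub_nrA_ne : (1 - nrAlpha : K) ≠ 0 := by
  have h : (algebraMap (Polynomial ℚ) K) (1 - Polynomial.X) = 1 - nrAlpha := by
    simp [nrAlpha, RatFunc.algebraMap_X]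
  rw [← h]
  exact RatFunc.algebraMap_ne_zero one_sub_poly_ne

lemma trans_nrA : Transcendental ℚ (nrAlpha : K) :=
  (transcendental_algebraMap_iff (RatFunc.algebraMap_injective ℚ)).mpr
    (Polynomial.transcendental_X ℚ)

lemma trans_one_sub : Transcendental ℚ ((1 : K) - nrAlpha) := by
  intro h
  apply trans_nrA
  have h2 : IsIntegral ℚ ((1:K) - (1 - nrAlpha)) :=
    isIntegral_one.sub (isAlgebraic_iff_isIntegral.mp h)
  simpa using isAlgebraic_iff_isIntegral.mpr h2

lemma trans_inv : Transcendental ℚ ((nrAlpha : K)⁻¹) := by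
  intro h
  exact trans_nrA (IsAlgebraic.inv_iff.mp h)

noncomputable def lift1 {x : K} (hx : Transcendental ℚ x) : K →+* K :=
  IsFractionRing.lift (A := Polynomial ℚ) (g := (Polynomial.aeval x).toRingHom)
    (by simpa using transcendental_iff_injective.mp hx)

lemma lift1_algebraMap {x : K} (hx : Transcendental ℚ x) (p : Polynomial ℚ) :
    lift1 hx (algebraMap (Polynomial ℚ) K p) = Polynomial.aeval x p :=
  IsFractionRing.lift_algebraMap (A := Polynomial ℚ) _ _

lemma lift1_X {x : K} (hx : Transcendental ℚ x) : lift1 hx nrAlpha = x := by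
  show lift1 hx RatFunc.X = x
  rw [← RatFunc.algebraMap_X, lift1_algebraMap]
  simp

lemma lift1_comp_self {x : K} (hx : Transcendental ℚ x) (F : K →+* K)
    (hF : F x = nrAlpha) : ∀ z, F (lift1 hx z) = z := by
  have h : F.comp (lift1 hx) = RingHom.id K := by
    apply IsLocalization.ringHom_ext (nonZeroDivisors (Polynomial ℚ))
    apply Polynomial.ringHom_ext
    · intro a
      simp [lift1_algebraMap, RatFunc.algebraMap_C]
    · show F (lift1 hx (algebraMap (Polynomial ℚ) K Polynomial.X)) =
        algebraMap (Polynomial ℚ) K Polynomial.X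
      rw [lift1_algebraMap]
      simpa [RatFunc.algebraMap_X, nrAlpha] using hF
  intro z
  exact DFunLike.congr_fun h z

noncomputable def Fsig : K →+* K := lift1 trans_one_sub
noncomputable def Ftau : K →+* K := lift1 trans_inv

lemma Fsig_X : Fsig nrAlpha = 1 - nrAlpha := lift1_X _
lemma Ftau_X : Ftau nrAlpha = nrAlpha⁻¹ := lift1_X _

lemma Fsig_Fsig : ∀ z, Fsig (Fsig z) = z :=
  lift1_comp_self trans_one_sub Fsig (by rw [map_sub, map_one, Fsig_X]; ring)

lemma Ftau_Ftau : ∀ z, Ftau (Ftau z) = z :=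
  lift1_comp_self trans_inv Ftau (by rw [map_inv₀, Ftau_X, inv_inv])

lemma mem_U1' {x s : K} {i j : ℤ} (hs : s = 1 ∨ s = -1)
    (h : x = s * nrAlpha ^ i * (1 - nrAlpha) ^ j) : x ∈ U1 := Or.inr ⟨s, i, j, hs, h⟩

lemma Fsig_mem : ∀ x ∈ U1, Fsig x ∈ U1 := by
  rintro x (rfl | ⟨s, i, j, hs, rfl⟩)
  · exact Or.inl (map_zero _)
  · refine mem_U1' (i := j) (j := i) hs ?_
    rw [map_mul, map_mul, map_zpow₀, map_zpow₀, map_sub, map_one, Fsig_X]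
    rcases hs with rfl | rfl <;>
      simp only [map_one, map_neg] <;> ring_nf

lemma Ftau_mem : ∀ x ∈ U1, Ftau x ∈ U1 := by
  rintro x (rfl | ⟨s, i, j, hs, rfl⟩)
  · exact Or.inl (map_zero _)
  · have h1 : (1 : K) - nrAlpha⁻¹ = (-1) * ((1 - nrAlpha) * nrAlpha⁻¹) := by
      field_simp
      rw [sub_div, div_self nrA_ne]
      ring
    have h2 : ((1:K) - nrAlpha⁻¹) ^ j = (-1 : K) ^ j * ((1 - nrAlpha) ^ j * nrAlpha ^ (-j)) := by
      rw [h1, mul_zpow, mul_zpow, inv_zpow, ← zpow_neg]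
    have hs' : Ftau s = s := by rcases hs with rfl | rfl <;> simp
    have key : Ftau (s * nrAlpha ^ i * (1 - nrAlpha) ^ j) =
        s * (-1 : K) ^ j * nrAlpha ^ (-(i + j)) * (1 - nrAlpha) ^ j := by
      rw [map_mul, map_mul, map_zpow₀, map_zpow₀, map_sub, map_one, Ftau_X, hs', h2,
        inv_zpow, ← zpow_neg,
        show nrAlpha ^ (-(i+j)) = nrAlpha ^ (-i) * nrAlpha ^ (-j) by
          rw [← zpow_add₀ nrA_ne]; congr 1; ring]
      ring_nf
    rcases Int.even_or_odd j with he | ho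
    · rw [key, Even.neg_one_zpow he]
      refine mem_U1' (i := -(i+j)) (j := j) hs (by ring)
    · rw [key, Odd.neg_one_zpow ho]
      rcases hs with rfl | rfl
      · exact mem_U1' (s := -1) (i := -(i+j)) (j := j) (Or.inr rfl) (by ring)
      · exact mem_U1' (s := 1) (i := -(i+j)) (j := j) (Or.inl rfl) (by ring)

/-- A pair of mutually inverse ring homs preserving `U1`. -/
structure GoodPair where
  F : K →+* K
  G : K →+* K
  FG : ∀ z, F (G z) = z
  GF : ∀ z, G (F z) = z
  Fmem : ∀ x ∈ U1, F x ∈ U1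
  Gmem : ∀ x ∈ U1, G x ∈ U1

noncomputable def GoodPair.id : GoodPair :=
  ⟨RingHom.id K, RingHom.id K, fun _ => rfl, fun _ => rfl, fun _ h => h, fun _ h => h⟩

noncomputable def GoodPair.sig : GoodPair :=
  ⟨Fsig, Fsig, Fsig_Fsig, Fsig_Fsig, Fsig_mem, Fsig_mem⟩

noncomputable def GoodPair.tau : GoodPair :=
  ⟨Ftau, Ftau, Ftau_Ftau, Ftau_Ftau, Ftau_mem, Ftau_mem⟩

/-- Composition: first apply `P`, then `Q`. -/
noncomputable def GoodPair.comp (Q P : GoodPair) : GoodPair where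
  F := Q.F.comp P.F
  G := P.G.comp Q.G
  FG := fun z => by simp [RingHom.comp_apply, P.FG, Q.FG]
  GF := fun z => by simp [RingHom.comp_apply, P.GF, Q.GF]
  Fmem := fun x hx => Q.Fmem _ (P.Fmem x hx)
  Gmem := fun x hx => P.Gmem _ (Q.Gmem x hx)

/-- Build a `U1Auto` from a `GoodPair`. -/
noncomputable def GoodPair.auto (P : GoodPair) : U1Auto where
  toFun := P.F
  bijOn := by
    refine ⟨fun x hx => P.Fmem x hx, fun x _ y _ h => ?_, fun y hy => ?_⟩
    · have := congrArg P.G h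
      rwa [P.GF, P.GF] at this
    · exact ⟨P.G y, P.Gmem y hy, P.FG y⟩
  map_one := map_one _
  map_mul := fun p _ q _ => map_mul _ p q
  map_add := fun p _ q _ _ => map_add _ p q
  defined_iff := fun p _ q _ => by
    constructor
    · intro h
      have := P.Fmem _ h
      rwa [map_add] at this
    · intro h
      have := P.Gmem _ h
      rw [← map_add, P.GF] at this
      exact this


lemma d_one_sub (n : ℕ) : eval 0 (derivative ((1 - X : Polynomial ℚ) ^ n)) = -n := by
  rw [derivative_pow]
  simp

lemma d_X (n : ℕ) : eval 0 (derivative ((X : Polynomial ℚ) ^ n)) = n * 0 ^ (n - 1) := by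
  rw [derivative_X_pow]
  simp

lemma poly_six (ε ε' : ℚ) (hε : ε = 1 ∨ ε = -1) (hε' : ε' = 1 ∨ ε' = -1)
    (a b c d e f : ℕ) (hace : a = 0 ∨ c = 0 ∨ e = 0) (hbdf : b = 0 ∨ d = 0 ∨ f = 0)
    (H : C ε * X ^ a * (1 - X) ^ b + C ε' * X ^ c * (1 - X) ^ d
        = (X : Polynomial ℚ) ^ e * (1 - X) ^ f) :
    (ε = 1 ∧ a = e + 1 ∧ b = f) ∨ (ε = 1 ∧ a = e ∧ b = f + 1) ∨
    (ε = 1 ∧ a + 1 = e ∧ b = f) ∨ (ε = 1 ∧ a = e ∧ b + 1 = f) ∨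
    (ε = -1 ∧ a = e + 1 ∧ b + 1 = f) ∨ (ε = -1 ∧ a + 1 = e ∧ b = f + 1) := by
  have hXf : ∀ (m n : ℕ), (X : Polynomial ℚ) ^ m * (1 - X) ^ n ≠ 0 :=
    fun m n => mul_ne_zero (pow_ne_zero _ X_ne_zero) (pow_ne_zero _ one_sub_poly_ne)
  have hεne : ε ≠ 0 := by rcases hε with rfl | rfl <;> norm_num
  have hε'ne : ε' ≠ 0 := by rcases hε' with rfl | rfl <;> norm_num
  have h0 := congrArg (eval 0) H
  have h1 := congrArg (eval 1) H
  simp only [eval_add, eval_mul, eval_pow, eval_sub, eval_one, eval_X, eval_C, sub_zero,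
    one_pow, one_mul, mul_one, sub_self] at h0 h1
  -- h0 : ε * 0 ^ a + ε' * 0 ^ c = 0 ^ e
  -- h1 : ε * 0 ^ b + ε' * 0 ^ d = 0 ^ f
  by_cases ha : a = 0
  · by_cases hc : c = 0
    · -- Case I : a = 0, c = 0
      subst ha; subst hc
      simp only [pow_zero, mul_one] at h0
      by_cases he : e = 0
      · rw [he] at h0
        simp only [pow_zero] at h0
        rcases hε with rfl | rfl <;> rcases hε' with rfl | rfl <;> norm_num at h0
      · rw [zero_pow he] at h0
        have hε'' : ε' = -ε := by linarith
        subst hε''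
        by_cases hb : b = 0
        · by_cases hd : d = 0
          · -- b = 0, d = 0 : contradiction
            rw [hb, hd] at H
            simp only [pow_zero, mul_one, map_neg] at H
            rw [add_neg_cancel] at H
            exact absurd H.symm (hXf e f)
          · -- b = 0, d > 0 : ε = 1, f = 0, then d = e = 1
            rw [hb, zero_pow hd, mul_zero, add_zero, pow_zero, mul_one] at h1
            by_cases hf : f = 0
            · rw [hf, pow_zero] at h1
              subst h1
              have H' : (1 : Polynomial ℚ) - (1 - X) ^ d = X ^ e := by
                rw [hb, hf] at H
                simp only [pow_zero, mul_one, one_mul, map_neg, map_one] at H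
                linear_combination H
              have hD := congrArg (fun P : Polynomial ℚ => eval 0 (derivative P)) H'
              simp only [derivative_sub, derivative_one, eval_sub, eval_zero,
                d_one_sub, d_X] at hD
              rcases e with _ | e; · exact absurd rfl he
              rcases e with _ | e
              · norm_num at hD
                exact Or.inr (Or.inr (Or.inl ⟨rfl, by omega, by omega⟩))
              · norm_num at hD
                omega
            · rw [zero_pow hf] at h1
              exact absurd h1 hεne
        · by_cases hd : d = 0
          · -- b > 0, d = 0 : ε = -1, f = 0, then b = e = 1
            rw [hd, pow_zero, mul_one, zero_pow hb, mul_zero, zero_add] at h1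
            by_cases hf : f = 0
            · rw [hf, pow_zero] at h1
              have hεm : ε = -1 := by linarith
              subst hεm
              have H' : (1 : Polynomial ℚ) - (1 - X) ^ b = X ^ e := by
                rw [hd, hf] at H
                simp only [pow_zero, mul_one, one_mul, map_neg, map_one, neg_neg] at H
                linear_combination H
              have hD := congrArg (fun P : Polynomial ℚ => eval 0 (derivative P)) H'
              simp only [derivative_sub, derivative_one, eval_sub, eval_zero,
                d_one_sub, d_X] at hD
              rcases e with _ | e; · exact absurd rfl he
              rcases e with _ | e
              · norm_num at hD
                exact Or.inr (Or.inr (Or.inr (Or.inr (Or.inr ⟨rfl, by omega, by omega⟩))))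
              · norm_num at hD
                omega
            · rw [zero_pow hf] at h1
              have : ε = 0 := by linarith
              exact absurd this hεne
          · -- b > 0, d > 0 : contradiction
            rcases hbdf with h | h | hf
            · exact absurd h hb
            · exact absurd h hd
            · rw [hf, pow_zero, zero_pow hb, zero_pow hd] at h1
              norm_num at h1
    · -- a = 0, c > 0
      by_cases he : e = 0
      · -- Case II : a = 0, e = 0, c > 0, so ε = 1
        subst ha; subst he
        simp only [pow_zero, mul_one, zero_pow hc, mul_zero, add_zero] at h0
        subst h0
        by_cases hb : b = 0
        · by_cases hd : d = 0
          · -- b = 0, d = 0 : ε' = -1, f > 0, then c = f = 1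
            simp only [hb, hd, pow_zero, mul_one, one_mul] at h1
            rcases hε' with rfl | rfl
            · exfalso
              by_cases hf : f = 0
              · rw [hf, pow_zero] at h1; norm_num at h1
              · rw [zero_pow hf] at h1; norm_num at h1
            · have hf : f ≠ 0 := by
                intro hf
                rw [hf, pow_zero] at h1; norm_num at h1
              have H' : (1 : Polynomial ℚ) - X ^ c = (1 - X) ^ f := by
                rw [hb, hd] at H
                simp only [pow_zero, mul_one, one_mul, map_neg, map_one] at H
                linear_combination H
              have hD := congrArg (fun P : Polynomial ℚ => eval 0 (derivative P)) H'
              simp only [derivative_sub, derivative_one, eval_sub, eval_zero,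
                d_one_sub, d_X] at hD
              rcases c with _ | c; · exact absurd rfl hc
              rcases c with _ | c
              · norm_num at hD
                have hf1 : f = 1 := by exact_mod_cast hD.symm
                exact Or.inr (Or.inr (Or.inr (Or.inl ⟨rfl, by omega, by omega⟩)))
              · norm_num at hD
                omega
          · -- b = 0, d > 0 : f = 0, contradiction
            rw [hb, pow_zero, mul_one, zero_pow hd, mul_zero, add_zero] at h1
            have hf : f = 0 := by
              by_contra hf
              rw [zero_pow hf] at h1; norm_num at h1
            have hzero : C ε' * (X ^ c * (1 - X) ^ d) = 0 := by
              rw [hb, hf] at H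
              simp only [pow_zero, mul_one, one_mul, map_one] at H
              linear_combination H
            exact absurd hzero (mul_ne_zero (by simpa using hε'ne) (hXf c d))
        · by_cases hd : d = 0
          · -- b > 0, d = 0 : ε' = 1, f = 0, then b = c = 1
            rw [zero_pow hb, mul_zero, zero_add, hd, pow_zero, mul_one] at h1
            have hf : f = 0 := by
              by_contra hf
              rw [zero_pow hf] at h1
              exact hε'ne h1
            rw [hf, pow_zero] at h1
            subst h1
            have H' : ((1 : Polynomial ℚ) - X) ^ b + X ^ c = 1 := by
              rw [hd, hf] at H
              simp only [pow_zero, mul_one, one_mul, map_one] at H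
              linear_combination H
            have hD := congrArg (fun P : Polynomial ℚ => eval 0 (derivative P)) H'
            simp only [derivative_add, derivative_one, eval_add, eval_zero,
              d_one_sub, d_X] at hD
            rcases c with _ | c; · exact absurd rfl hc
            rcases c with _ | c
            · norm_num at hD
              have hb1 : b = 1 := by
                have : (b:ℚ) = 1 := by linarith
                exact_mod_cast this
              exact Or.inr (Or.inl ⟨rfl, by omega, by omega⟩)
            · norm_num at hD
              omega
          · -- b > 0, d > 0 : f = 0, contradiction
            rcases hbdf with h | h | hf
            · exact absurd h hb
            · exact absurd h hd
            · rw [hf, pow_zero, zero_pow hb, mul_zero, zero_pow hd, mul_zero, add_zero] at h1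
              norm_num at h1
      · -- a = 0, c > 0, e > 0 : impossible
        subst ha
        rw [pow_zero, mul_one, zero_pow hc, mul_zero, add_zero, zero_pow he] at h0
        exact absurd h0 hεne
  · by_cases hc : c = 0
    · -- a > 0, c = 0
      by_cases he : e = 0
      · -- Case III : c = 0, e = 0, a > 0, so ε' = 1
        subst hc; subst he
        simp only [pow_zero, mul_one, zero_pow ha, mul_zero, zero_add] at h0
        subst h0
        by_cases hb : b = 0
        · by_cases hd : d = 0
          · -- b = 0, d = 0 : ε = -1, f > 0, then a = f = 1
            simp only [hb, hd, pow_zero, mul_one, one_mul] at h1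
            rcases hε with rfl | rfl
            · exfalso
              by_cases hf : f = 0
              · rw [hf, pow_zero] at h1; norm_num at h1
              · rw [zero_pow hf] at h1; norm_num at h1
            · have hf : f ≠ 0 := by
                intro hf
                rw [hf, pow_zero] at h1; norm_num at h1
              have H' : (1 : Polynomial ℚ) - X ^ a = (1 - X) ^ f := by
                rw [hb, hd] at H
                simp only [pow_zero, mul_one, one_mul, map_neg, map_one] at H
                linear_combination H
              have hD := congrArg (fun P : Polynomial ℚ => eval 0 (derivative P)) H'
              simp only [derivative_sub, derivative_one, eval_sub, eval_zero,
                d_one_sub, d_X] at hD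
              rcases a with _ | a; · exact absurd rfl ha
              rcases a with _ | a
              · norm_num at hD
                have hf1 : f = 1 := by exact_mod_cast hD.symm
                exact Or.inr (Or.inr (Or.inr (Or.inr (Or.inl ⟨rfl, by omega, by omega⟩))))
              · norm_num at hD
                omega
          · -- b = 0, d > 0 : ε = 1, f = 0, then a = d = 1
            rw [hb, pow_zero, mul_one, zero_pow hd, mul_zero, add_zero] at h1
            have hf : f = 0 := by
              by_contra hf
              rw [zero_pow hf] at h1
              exact hεne h1
            rw [hf, pow_zero] at h1
            subst h1
            have H' : (X : Polynomial ℚ) ^ a + (1 - X) ^ d = 1 := by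
              rw [hb, hf] at H
              simp only [pow_zero, mul_one, one_mul, map_one] at H
              linear_combination H
            have hD := congrArg (fun P : Polynomial ℚ => eval 0 (derivative P)) H'
            simp only [derivative_add, derivative_one, eval_add, eval_zero,
              d_one_sub, d_X] at hD
            rcases a with _ | a; · exact absurd rfl ha
            rcases a with _ | a
            · norm_num at hD
              exact Or.inl ⟨rfl, by omega, by omega⟩
            · norm_num at hD
              omega
        · by_cases hd : d = 0
          · -- b > 0, d = 0 : f = 0, contradiction
            rw [zero_pow hb, mul_zero, zero_add, hd, pow_zero, mul_one] at h1
            have hf : f = 0 := by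
              by_contra hf
              rw [zero_pow hf] at h1; norm_num at h1
            have hzero : C ε * (X ^ a * (1 - X) ^ b) = 0 := by
              rw [hd, hf] at H
              simp only [pow_zero, mul_one, one_mul, map_one] at H
              linear_combination H
            exact absurd hzero (mul_ne_zero (by simpa using hεne) (hXf a b))
          · -- b > 0, d > 0 : f = 0, contradiction
            rcases hbdf with h | h | hf
            · exact absurd h hb
            · exact absurd h hd
            · rw [hf, pow_zero, zero_pow hb, mul_zero, zero_pow hd, mul_zero, add_zero] at h1
              norm_num at h1
      · -- a > 0, c = 0, e > 0 : impossible
        subst hc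
        rw [pow_zero, mul_one, zero_pow ha, mul_zero, zero_add, zero_pow he] at h0
        exact absurd h0 hε'ne
    · -- a > 0, c > 0 : e = 0 from hace, contradiction
      have he : e = 0 := by
        rcases hace with h | h | h
        · exact absurd h ha
        · exact absurd h hc
        · exact h
      subst he
      simp only [zero_pow ha, zero_pow hc, mul_zero, add_zero, pow_zero] at h0
      norm_num at h0
lemma fund_cases (p : K) (hp : IsFund p) (hp0 : p ≠ 0) (hp1 : p ≠ 1) :
    p = nrAlpha ∨ p = 1 - nrAlpha ∨ p = nrAlpha⁻¹ ∨ p = (1 - nrAlpha)⁻¹ ∨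
    p = 1 - nrAlpha⁻¹ ∨ p = 1 - (1 - nrAlpha)⁻¹ := by
  obtain ⟨hpU, hqU⟩ := hp
  rcases hpU with rfl | ⟨s, i, j, hs, hpe⟩
  · exact absurd rfl hp0
  rcases hqU with h0 | ⟨s', k, l, hs', hqe⟩
  · exact absurd (sub_eq_zero.mp h0).symm hp1
  obtain ⟨sq, hsq, hsmap⟩ : ∃ t : ℚ, (t = 1 ∨ t = -1) ∧
      algebraMap (Polynomial ℚ) K (C t) = s := by
    rcases hs with rfl | rfl
    · exact ⟨1, Or.inl rfl, by simp⟩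
    · exact ⟨-1, Or.inr rfl, by simp⟩
  obtain ⟨sq', hsq', hsmap'⟩ : ∃ t : ℚ, (t = 1 ∨ t = -1) ∧
      algebraMap (Polynomial ℚ) K (C t) = s' := by
    rcases hs' with rfl | rfl
    · exact ⟨1, Or.inl rfl, by simp⟩
    · exact ⟨-1, Or.inr rfl, by simp⟩
  obtain ⟨M, hM0, hMi, hMk, hMm⟩ : ∃ M : ℤ, 0 ≤ M ∧ 0 ≤ i + M ∧ 0 ≤ k + M ∧
      (i + M = 0 ∨ k + M = 0 ∨ M = 0) :=
    ⟨max 0 (max (-i) (-k)), by omega, by omega, by omega, by omega⟩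
  obtain ⟨N, hN0, hNj, hNl, hNm⟩ : ∃ N : ℤ, 0 ≤ N ∧ 0 ≤ j + N ∧ 0 ≤ l + N ∧
      (j + N = 0 ∨ l + N = 0 ∨ N = 0) :=
    ⟨max 0 (max (-j) (-l)), by omega, by omega, by omega, by omega⟩
  set a := (i + M).toNat with ha'
  set b := (j + N).toNat with hb'
  set c := (k + M).toNat with hc'
  set d := (l + N).toNat with hd'
  set e := M.toNat with he'
  set f := N.toNat with hf'
  have haz : (a:ℤ) = i + M := Int.toNat_of_nonneg hMi
  have hbz : (b:ℤ) = j + N := Int.toNat_of_nonneg hNj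
  have hcz : (c:ℤ) = k + M := Int.toNat_of_nonneg hMk
  have hdz : (d:ℤ) = l + N := Int.toNat_of_nonneg hNl
  have hez : (e:ℤ) = M := Int.toNat_of_nonneg hM0
  have hfz : (f:ℤ) = N := Int.toNat_of_nonneg hN0
  have hsum : s * nrAlpha ^ i * (1 - nrAlpha) ^ j + s' * nrAlpha ^ k * (1 - nrAlpha) ^ l
      = 1 := by rw [← hpe, ← hqe]; ring
  have key : s * nrAlpha ^ (a:ℕ) * (1 - nrAlpha) ^ (b:ℕ)
      + s' * nrAlpha ^ (c:ℕ) * (1 - nrAlpha) ^ (d:ℕ)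
      = nrAlpha ^ (e:ℕ) * (1 - nrAlpha) ^ (f:ℕ) := by
    have p1 : (nrAlpha:K) ^ (a:ℕ) = nrAlpha ^ i * nrAlpha ^ M := by
      rw [← zpow_natCast, haz, zpow_add₀ nrA_ne]
    have p2 : ((1 - nrAlpha :K)) ^ (b:ℕ) = (1-nrAlpha) ^ j * (1-nrAlpha) ^ N := by
      rw [← zpow_natCast, hbz, zpow_add₀ one_sub_nrA_ne]
    have p3 : (nrAlpha:K) ^ (c:ℕ) = nrAlpha ^ k * nrAlpha ^ M := by
      rw [← zpow_natCast, hcz, zpow_add₀ nrA_ne]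
    have p4 : ((1 - nrAlpha :K)) ^ (d:ℕ) = (1-nrAlpha) ^ l * (1-nrAlpha) ^ N := by
      rw [← zpow_natCast, hdz, zpow_add₀ one_sub_nrA_ne]
    have p5 : (nrAlpha:K) ^ (e:ℕ) = nrAlpha ^ M := by rw [← zpow_natCast, hez]
    have p6 : ((1 - nrAlpha :K)) ^ (f:ℕ) = (1-nrAlpha) ^ N := by rw [← zpow_natCast, hfz]
    rw [p1, p2, p3, p4, p5, p6]
    linear_combination (nrAlpha ^ M * (1 - nrAlpha) ^ N) * hsum
  have hpoly : (C sq * X ^ a * (1 - X) ^ b + C sq' * X ^ c * (1 - X) ^ d : Polynomial ℚ)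
      = (X : Polynomial ℚ) ^ e * (1 - X) ^ f := by
    apply RatFunc.algebraMap_injective ℚ
    simp only [map_add, map_mul, map_pow, map_sub, map_one, RatFunc.algebraMap_X,
      hsmap, hsmap']
    exact key
  have hace : a = 0 ∨ c = 0 ∨ e = 0 := by omega
  have hbdf : b = 0 ∨ d = 0 ∨ f = 0 := by omega
  have six := poly_six sq sq' hsq hsq' a b c d e f hace hbdf hpoly
  rcases six with ⟨h1, h2, h3⟩ | ⟨h1, h2, h3⟩ | ⟨h1, h2, h3⟩ | ⟨h1, h2, h3⟩
    | ⟨h1, h2, h3⟩ | ⟨h1, h2, h3⟩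
  · left
    have hi : i = 1 := by omega
    have hj : j = 0 := by omega
    have hs1 : s = 1 := by rw [← hsmap, h1]; simp
    rw [hpe, hs1, hi, hj]
    simp
  · right; left
    have hi : i = 0 := by omega
    have hj : j = 1 := by omega
    have hs1 : s = 1 := by rw [← hsmap, h1]; simp
    rw [hpe, hs1, hi, hj]
    simp
  · right; right; left
    have hi : i = -1 := by omega
    have hj : j = 0 := by omega
    have hs1 : s = 1 := by rw [← hsmap, h1]; simp
    rw [hpe, hs1, hi, hj]
    simp
  · right; right; right; left
    have hi : i = 0 := by omega
    have hj : j = -1 := by omega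
    have hs1 : s = 1 := by rw [← hsmap, h1]; simp
    rw [hpe, hs1, hi, hj]
    simp
  · right; right; right; right; right
    have hi : i = 1 := by omega
    have hj : j = -1 := by omega
    have hs1 : s = -1 := by rw [← hsmap, h1]; simp
    rw [hpe, hs1, hi, hj]
    rw [zpow_one, zpow_neg_one]
    field_simp
    rw [show (1:K) - 1/(1-nrAlpha) = ((1-nrAlpha) - 1)/(1-nrAlpha) by
      rw [sub_div, div_self one_sub_nrA_ne]]
    congr 1
    ring
  · right; right; right; right; left
    have hi : i = -1 := by omega
    have hj : j = 1 := by omega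
    have hs1 : s = -1 := by rw [← hsmap, h1]; simp
    rw [hpe, hs1, hi, hj]
    rw [zpow_one, zpow_neg_one]
    field_simp
    rw [sub_div, div_self nrA_ne]
    ring

lemma exists_pair (p : RatFunc ℚ)
    (h : p = nrAlpha ∨ p = 1 - nrAlpha ∨ p = nrAlpha⁻¹ ∨ p = (1 - nrAlpha)⁻¹ ∨
      p = 1 - nrAlpha⁻¹ ∨ p = 1 - (1 - nrAlpha)⁻¹) :
    ∃ P : GoodPair, P.F nrAlpha = p := by
  rcases h with rfl | rfl | rfl | rfl | rfl | rfl
  · exact ⟨GoodPair.id, rfl⟩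
  · exact ⟨GoodPair.sig, Fsig_X⟩
  · exact ⟨GoodPair.tau, Ftau_X⟩
  · refine ⟨GoodPair.sig.comp GoodPair.tau, ?_⟩
    show Fsig (Ftau nrAlpha) = _
    rw [Ftau_X, map_inv₀, Fsig_X]
  · refine ⟨GoodPair.tau.comp GoodPair.sig, ?_⟩
    show Ftau (Fsig nrAlpha) = _
    rw [Fsig_X, map_sub, map_one, Ftau_X]
  · refine ⟨GoodPair.sig.comp (GoodPair.tau.comp GoodPair.sig), ?_⟩
    show Fsig (Ftau (Fsig nrAlpha)) = _
    rw [Fsig_X, map_sub, map_one, Ftau_X, map_sub, map_one, map_inv₀, Fsig_X]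

noncomputable def GoodPair.symm (P : GoodPair) : GoodPair :=
  ⟨P.G, P.F, P.GF, P.FG, P.Gmem, P.Fmem⟩

/-- For any two fundamental elements `p, q ∉ {0, 1}` of `𝕌₁`, there is an
automorphism of `𝕌₁` taking `p` to `q`. -/
theorem exists_automorphism_mapping_fundamental_elements
    (p q : RatFunc ℚ) (hp : IsFund p) (hq : IsFund q)
    (hp0 : p ≠ 0) (hp1 : p ≠ 1) (hq0 : q ≠ 0) (hq1 : q ≠ 1) :
    ∃ ψ : U1Auto, ψ.toFun p = q := by
  obtain ⟨P1, hP1⟩ := exists_pair p (fund_cases p hp hp0 hp1)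
  obtain ⟨P2, hP2⟩ := exists_pair q (fund_cases q hq hq0 hq1)
  refine ⟨(P2.comp P1.symm).auto, ?_⟩
  show P2.F (P1.G p) = q
  rw [← hP1, P1.GF, hP2]
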